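/- arXiv:2002.01446 — 7 statements merged into one kernel-verified Lean document; each statement's English description precedes it below -/
import Mathlib

section
/- Let G be a group and N a characteristic subgroup of G (in particular N is normal). If the quotient group G/N has the R∞-property, then G has the R∞-property. -/
/-- The setoid of `φ`-twisted conjugacy on a group `G`:
`x ~ y` iff `y = g * x * (φ g)⁻¹` for some `g`. -/
def twistedConjSetoid (G : Type*) [Group G] (φ : G ≃* G) : Setoid G where
  r x y := ∃ g : G, y = g * x * (φ g)⁻¹
  iseqv := by
    refine ⟨fun x => ⟨1, by simp⟩, ?_, ?_⟩
    · rintro x y ⟨g, rfl⟩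
      exact ⟨g⁻¹, by simp [mul_assoc]⟩
    · rintro x y z ⟨g, rfl⟩ ⟨h, rfl⟩
      exact ⟨h * g, by simp [mul_assoc, mul_inv_rev]⟩


/-- A group `G` has the `R∞`-property if every automorphism has infinitely many twisted
conjugacy classes. -/
def RInfinity (G : Type*) [Group G] : Prop :=
  ∀ φ : G ≃* G, Infinite (Quotient (twistedConjSetoid G φ))

/-- If `N` is a characteristic (hence normal) subgroup of `G` and `G ⧸ N` has the
`R∞`-property, then so does `G`. -/
theorem rInfinity_of_quotient_characteristic {G : Type*} [Group G]
    (N : Subgroup G) [N.Normal] [N.Characteristic]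
    (h : RInfinity (G ⧸ N)) : RInfinity G := by
  intro φ
  have hmap : N.map φ.toMonoidHom = N :=
    Subgroup.characteristic_iff_map_eq.mp ‹N.Characteristic› φ
  let ψ : (G ⧸ N) ≃* (G ⧸ N) := QuotientGroup.congr N N φ hmap
  have hψ : ∀ g : G, ψ (QuotientGroup.mk g) = QuotientGroup.mk (φ g) := fun g => rfl
  have := h ψ
  refine Infinite.of_surjective
    (Quotient.map (QuotientGroup.mk : G → G ⧸ N) ?_ :
      Quotient (twistedConjSetoid G φ) → Quotient (twistedConjSetoid (G ⧸ N) ψ)) ?_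
  · rintro x y ⟨g, rfl⟩
    exact ⟨QuotientGroup.mk g, by simp [hψ]⟩
  · intro q
    induction q using Quotient.inductionOn with
    | h x =>
      induction x using QuotientGroup.induction_on with
      | H g => exact ⟨Quotient.mk _ g, rfl⟩
end

section
/- Let G be a group and φ an automorphism of G. If the φ-twisted conjugacy class [e]_φ = { g·φ(g)⁻¹ : g ∈ G } of the identity element e is a subgroup of G, then it is a normal subgroup of G. -/
/-- If the `φ`-twisted conjugacy class `[e]_φ = { g·φ(g)⁻¹ : g ∈ G }` of the identity is a
subgroup of `G`, then it is a normal subgroup. -/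
theorem normal_of_twisted_class_of_one_subgroup {G : Type*} [Group G] (φ : G ≃* G)
    (H : Subgroup G) (hH : (H : Set G) = {x : G | ∃ g : G, x = g * (φ g)⁻¹}) :
    H.Normal := by
  have mem_iff : ∀ x : G, x ∈ H ↔ ∃ g : G, x = g * (φ g)⁻¹ := by
    intro x
    constructor
    · intro hx; have := hH ▸ (show x ∈ (H : Set G) from hx); exact this
    · intro hx; show x ∈ (H : Set G); rw [hH]; exact hx
  constructor
  intro x hx g
  obtain ⟨a, rfl⟩ := (mem_iff _).mp hx
  have h1 : g * a * (φ (g * a))⁻¹ ∈ H := (mem_iff _).mpr ⟨g * a, rfl⟩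
  have h2 : (g * (φ g)⁻¹)⁻¹ ∈ H := H.inv_mem ((mem_iff _).mpr ⟨g, rfl⟩)
  have h3 := H.mul_mem h1 h2
  have : g * a * (φ (g * a))⁻¹ * (g * (φ g)⁻¹)⁻¹ = g * (a * (φ a)⁻¹) * g⁻¹ := by
    simp [map_mul, mul_assoc]
  rwa [this] at h3
end

section
/- Let G be a group and φ a central automorphism of G. Then the φ-twisted conjugacy class [e]_φ = { g·φ(g)⁻¹ : g ∈ G } of the identity element is a subgroup of G. -/
/-- If `φ` is a central automorphism of `G`, then the `φ`-twisted conjugacy class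
`[e]_φ = { g·φ(g)⁻¹ : g ∈ G }` of the identity is a subgroup of `G`. -/
theorem twisted_class_of_one_subgroup_of_central {G : Type*} [Group G] (φ : G ≃* G)
    (hφ : ∀ g : G, g⁻¹ * φ g ∈ Subgroup.center G) :
    ∃ H : Subgroup G, (H : Set G) = {x : G | ∃ g : G, x = g * (φ g)⁻¹} := by
  -- key: each g * (φ g)⁻¹ is central
  have key : ∀ g : G, g * (φ g)⁻¹ ∈ Subgroup.center G := by
    intro g
    have h1 := (Subgroup.center G).inv_mem (hφ g)
    have he : (g⁻¹ * φ g)⁻¹ = (φ g)⁻¹ * g := by group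
    rw [he] at h1
    have h2 := Subgroup.mem_center_iff.mp h1
    have : g * (φ g)⁻¹ = (φ g)⁻¹ * g := by
      calc g * (φ g)⁻¹ = g * ((φ g)⁻¹ * g) * g⁻¹ := by group
        _ = (φ g)⁻¹ * g * g * g⁻¹ := by rw [h2 g]
        _ = (φ g)⁻¹ * g := by group
    rw [this]; exact h1
  refine ⟨{ carrier := {x : G | ∃ g : G, x = g * (φ g)⁻¹}
            one_mem' := ⟨1, by simp⟩
            mul_mem' := ?_
            inv_mem' := ?_ }, rfl⟩
  · rintro a b ⟨g, rfl⟩ ⟨h, rfl⟩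
    refine ⟨g * h, ?_⟩
    have hc := Subgroup.mem_center_iff.mp (key h)
    calc g * (φ g)⁻¹ * (h * (φ h)⁻¹) = g * ((φ g)⁻¹ * (h * (φ h)⁻¹)) := by group
      _ = g * (h * (φ h)⁻¹ * (φ g)⁻¹) := by rw [hc]
      _ = g * h * (φ (g * h))⁻¹ := by rw [map_mul]; group
  · rintro a ⟨g, rfl⟩
    refine ⟨g⁻¹, ?_⟩
    have hc := Subgroup.mem_center_iff.mp (hφ g)
    calc (g * (φ g)⁻¹)⁻¹ = g * (g⁻¹ * φ g) * g⁻¹ := by group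
      _ = g⁻¹ * φ g * g * g⁻¹ := by rw [hc g]
      _ = g⁻¹ * (φ g⁻¹)⁻¹ := by rw [map_inv]; group
end

section
/- Let G be a group with trivial center, Z(G) = {e}. Then G has the R∞-property if and only if G has the S∞-property. -/
/-- The isogredience setoid on the coset `Inn(G)·γ` of `Inn(G)` in `Aut(G)`:
`α ≈ β` iff `β = i_h ∘ α ∘ i_{h⁻¹}` for some `h : G`. -/
def cosetIsogSetoid (G : Type*) [Group G] (γ : MulAut G) :
    Setoid {α : MulAut G // ∃ g : G, α = MulAut.conj g * γ} where
  r α β := ∃ h : G, (β : MulAut G) =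
    MulAut.conj h * (α : MulAut G) * (MulAut.conj h)⁻¹
  iseqv := by
    refine ⟨fun α => ⟨1, by simp⟩, ?_, ?_⟩
    · rintro α β ⟨h, hh⟩
      exact ⟨h⁻¹, by rw [hh]; simp [mul_assoc]⟩
    · rintro α β δ ⟨h₁, hh₁⟩ ⟨h₂, hh₂⟩
      exact ⟨h₂ * h₁, by rw [hh₂, hh₁]; simp [mul_assoc, map_mul, mul_inv_rev]⟩

/-- A group `G` has the `S∞`-property if every coset `Inn(G)·γ` of `Inn(G)` in `Aut(G)`
contains infinitely many isogredience classes. -/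
def SInfinity (G : Type*) [Group G] : Prop :=
  ∀ γ : MulAut G, Infinite (Quotient (cosetIsogSetoid G γ))


private lemma conj_mul_comm {G : Type*} [Group G] (γ : MulAut G) (h : G) :
    γ * MulAut.conj h = MulAut.conj (γ h) * γ := by
  ext g; simp [map_mul]

private lemma conj_inj_of_center_trivial {G : Type*} [Group G]
    (hZ : Subgroup.center G = ⊥) : Function.Injective (MulAut.conj : G →* MulAut G) := by
  intro x y h
  have key : ∀ g : G, x * g * x⁻¹ = y * g * y⁻¹ := by
    intro g
    have := DFunLike.congr_fun h g
    simpa using this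
  have : y⁻¹ * x ∈ Subgroup.center G := by
    rw [Subgroup.mem_center_iff]
    intro g
    have h1 := key g
    calc g * (y⁻¹ * x) = y⁻¹ * (y * g * y⁻¹) * x := by group
      _ = y⁻¹ * (x * g * x⁻¹) * x := by rw [h1]
      _ = y⁻¹ * x * g := by group
  rw [hZ, Subgroup.mem_bot] at this
  have : x = y := by
    have h1 : y * (y⁻¹ * x) = y * 1 := by rw [this]
    simpa using h1
  exact this

private noncomputable def quotEquiv {G : Type*} [Group G]
    (hZ : Subgroup.center G = ⊥) (γ : MulAut G) :
    Quotient (twistedConjSetoid G γ) ≃ Quotient (cosetIsogSetoid G γ) := by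
  let f : G → {α : MulAut G // ∃ g : G, α = MulAut.conj g * γ} :=
    fun x => ⟨MulAut.conj x * γ, x, rfl⟩
  have hcomp : ∀ h x : G, MulAut.conj h * (MulAut.conj x * γ) * (MulAut.conj h)⁻¹
      = MulAut.conj (h * x * (γ h)⁻¹) * γ := by
    intro h x
    have : γ * (MulAut.conj h)⁻¹ = MulAut.conj ((γ h)⁻¹) * γ := by
      rw [← map_inv, conj_mul_comm, map_inv, map_inv]
    calc MulAut.conj h * (MulAut.conj x * γ) * (MulAut.conj h)⁻¹
        = MulAut.conj h * MulAut.conj x * (γ * (MulAut.conj h)⁻¹) := by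
          simp [mul_assoc]
      _ = MulAut.conj h * MulAut.conj x * (MulAut.conj ((γ h)⁻¹) * γ) := by rw [this]
      _ = MulAut.conj (h * x * (γ h)⁻¹) * γ := by simp [map_mul, mul_assoc]
  have hrel : ∀ x y : G, (twistedConjSetoid G γ).r x y ↔ (cosetIsogSetoid G γ).r (f x) (f y) := by
    intro x y
    constructor
    · rintro ⟨g, rfl⟩
      exact ⟨g, (hcomp g x).symm⟩
    · rintro ⟨h, hh⟩
      refine ⟨h, ?_⟩
      have : (MulAut.conj y : MulAut G) * γ = MulAut.conj (h * x * (γ h)⁻¹) * γ := by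
        rw [← hcomp]; exact hh
      have h2 : (MulAut.conj y : MulAut G) = MulAut.conj (h * x * (γ h)⁻¹) :=
        mul_right_cancel this
      exact conj_inj_of_center_trivial hZ h2
  have hsound : ∀ a b : G, (twistedConjSetoid G γ).r a b →
      (Quotient.mk (cosetIsogSetoid G γ) (f a)) = Quotient.mk _ (f b) := by
    intro a b hab
    exact Quotient.sound ((hrel a b).mp hab)
  refine Equiv.ofBijective
    (Quotient.lift (fun x => Quotient.mk (cosetIsogSetoid G γ) (f x)) hsound) ⟨?_, ?_⟩
  · intro a b
    induction a using Quotient.ind with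
    | _ a =>
    induction b using Quotient.ind with
    | _ b =>
    intro hab
    exact Quotient.sound ((hrel a b).mpr (Quotient.exact hab))
  · intro q
    induction q using Quotient.ind with
    | _ α =>
    obtain ⟨α, g, hg⟩ := α
    exact ⟨Quotient.mk _ g, by simp only [Quotient.lift_mk]; congr 1; exact Subtype.ext hg.symm⟩

/-- If `G` has trivial center, then `G` has the `R∞`-property if and only if it has the
`S∞`-property. -/
theorem rInfinity_iff_sInfinity_of_center_trivial {G : Type*} [Group G]
    (hZ : Subgroup.center G = ⊥) : RInfinity G ↔ SInfinity G := by
  constructor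
  · intro h γ
    exact (quotEquiv hZ γ).infinite_iff.mp (h γ)
  · intro h φ
    exact (quotEquiv hZ φ).infinite_iff.mpr (h φ)
end

section
/- Let G be a group and N a characteristic subgroup of G. If the quotient group G/N has the S∞-property, then G has the S∞-property. -/
section Aux

variable {G : Type*} [Group G] (N : Subgroup G) [N.Normal] [N.Characteristic]

/-- Descend an automorphism of `G` to an automorphism of `G ⧸ N`. -/
def descAut (φ : G ≃* G) : MulAut (G ⧸ N) :=
  QuotientGroup.congr N N φ (Subgroup.characteristic_iff_map_eq.mp ‹N.Characteristic› φ)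

lemma descAut_mk (φ : G ≃* G) (x : G) :
    descAut N φ (QuotientGroup.mk x) = QuotientGroup.mk (φ x) := rfl

lemma descAut_mul (φ ψ : MulAut G) :
    descAut N (φ * ψ) = descAut N φ * descAut N ψ := by
  ext q
  induction q using QuotientGroup.induction_on with
  | H x => rfl

lemma descAut_conj (g : G) :
    descAut N (MulAut.conj g) = MulAut.conj (QuotientGroup.mk g : G ⧸ N) := by
  ext q
  induction q using QuotientGroup.induction_on with
  | H x => rfl

end Aux

/-- If `N` is a characteristic subgroup of `G` and `G ⧸ N` has the `S∞`-property, then so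
does `G`. -/
theorem sInfinity_of_quotient_characteristic {G : Type*} [Group G]
    (N : Subgroup G) [N.Normal] [N.Characteristic]
    (h : SInfinity (G ⧸ N)) : SInfinity G := by
  intro γ
  have := h (descAut N γ)
  set S₁ := cosetIsogSetoid G γ
  set S₂ := cosetIsogSetoid (G ⧸ N) (descAut N γ)
  -- the map on representatives
  have fprop : ∀ α : {α : MulAut G // ∃ g : G, α = MulAut.conj g * γ},
      ∃ g : G ⧸ N, descAut N (α : MulAut G) = MulAut.conj g * descAut N γ := by
    rintro ⟨α, g, rfl⟩
    exact ⟨QuotientGroup.mk g, by rw [descAut_mul, descAut_conj]⟩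
  let f : {α : MulAut G // ∃ g : G, α = MulAut.conj g * γ} →
      {β : MulAut (G ⧸ N) // ∃ g : G ⧸ N, β = MulAut.conj g * descAut N γ} :=
    fun α => ⟨descAut N (α : MulAut G), fprop α⟩
  have hf : ∀ α β, S₁.r α β → S₂.r (f α) (f β) := by
    rintro ⟨α, hα⟩ ⟨β, hβ⟩ ⟨k, hk⟩
    refine ⟨QuotientGroup.mk k, ?_⟩
    have hk' : β = MulAut.conj k * α * (MulAut.conj k)⁻¹ := hk
    show descAut N β = MulAut.conj ((QuotientGroup.mk k : G ⧸ N)) * descAut N α *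
      (MulAut.conj ((QuotientGroup.mk k : G ⧸ N)))⁻¹
    rw [hk', ← map_inv, descAut_mul, descAut_mul, descAut_conj, descAut_conj]
    simp
  let F : Quotient S₁ → Quotient S₂ := Quotient.map f hf
  have hFsurj : Function.Surjective F := by
    intro q
    induction q using Quotient.inductionOn with
    | h β =>
      obtain ⟨β, gbar, rfl⟩ := β
      obtain ⟨g, rfl⟩ := QuotientGroup.mk_surjective gbar
      refine ⟨Quotient.mk S₁ ⟨MulAut.conj g * γ, g, rfl⟩, ?_⟩
      show Quotient.mk S₂ _ = _
      congr 1
      refine Subtype.ext ?_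
      show descAut N (MulAut.conj g * γ) = MulAut.conj ((QuotientGroup.mk g : G ⧸ N)) * descAut N γ
      rw [descAut_mul, descAut_conj]
  exact Infinite.of_surjective F hFsurj
end

section
/- Let G be a simple group with the R∞-property, and let φ be an automorphism of G. If the φ-twisted conjugacy class [e]_φ = { g·φ(g)⁻¹ : g ∈ G } is a subgroup of G, then φ is the identity automorphism. -/
/-- If `G` is a simple group with the `R∞`-property and the twisted conjugacy class
`[e]_φ = { g·φ(g)⁻¹ : g ∈ G }` is a subgroup of `G`, then `φ` is the identity. -/
theorem eq_id_of_twisted_class_of_one_subgroup {G : Type*} [Group G] [IsSimpleGroup G]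
    (hR : RInfinity G) (φ : G ≃* G) (H : Subgroup G)
    (hH : (H : Set G) = {x : G | ∃ g : G, x = g * (φ g)⁻¹}) :
    ∀ x : G, φ x = x := by
  have hmem : ∀ x : G, x ∈ H ↔ ∃ g : G, x = g * (φ g)⁻¹ := by
    intro x
    rw [← SetLike.mem_coe, hH]; rfl
  have hnor : H.Normal := by
    constructor
    intro h hh a
    obtain ⟨g, rfl⟩ := (hmem h).1 hh
    have h1 : a * g * (φ (a * g))⁻¹ ∈ H :=
      (hmem _).2 ⟨a * g, rfl⟩
    have h2 : φ a * a⁻¹ ∈ H := by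
      have := H.inv_mem ((hmem (a * (φ a)⁻¹)).2 ⟨a, rfl⟩)
      simpa using this
    have := H.mul_mem h1 h2
    simpa [mul_assoc, mul_inv_rev] using this
  rcases hnor.eq_bot_or_eq_top with hb | ht
  · intro x
    have : x * (φ x)⁻¹ ∈ H := (hmem _).2 ⟨x, rfl⟩
    rw [hb, Subgroup.mem_bot] at this
    have := mul_inv_eq_one.mp this
    exact this.symm
  · exfalso
    have hinf := hR φ
    have hsub : Subsingleton (Quotient (twistedConjSetoid G φ)) := by
      constructor
      intro a b
      induction a using Quotient.inductionOn with | h a =>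
      induction b using Quotient.inductionOn with | h b =>
      have key : ∀ c : G, (twistedConjSetoid G φ).r 1 c := by
        intro c
        have : c ∈ H := by rw [ht]; trivial
        obtain ⟨g, rfl⟩ := (hmem c).1 this
        exact ⟨g, by simp⟩
      exact Quotient.sound ((twistedConjSetoid G φ).trans ((twistedConjSetoid G φ).symm (key a)) (key b))
    exact (not_subsingleton _) hsub
end

section
/- Let G be a group such that G/Z(G) is a simple group having the R∞-property, and let φ be an automorphism of G. Then the φ-twisted conjugacy class [e]_φ = { g·φ(g)⁻¹ : g ∈ G } is a subgroup of G if and only if φ is a central automorphism of G. -/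
/-- An automorphism maps the center onto the center. -/
lemma map_center_eq {G : Type*} [Group G] (φ : G ≃* G) :
    (Subgroup.center G).map (φ : G →* G) = Subgroup.center G := by
  ext x
  simp only [Subgroup.mem_map]
  constructor
  · rintro ⟨y, hy, rfl⟩
    rw [Subgroup.mem_center_iff] at hy ⊢
    intro g
    have := hy (φ.symm g)
    calc g * φ y = φ (φ.symm g * y) := by simp [map_mul]
      _ = φ (y * φ.symm g) := by rw [this]
      _ = φ y * g := by simp [map_mul]
  · intro hx
    refine ⟨φ.symm x, ?_, by simp⟩
    rw [Subgroup.mem_center_iff] at hx ⊢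
    intro g
    have := hx (φ g)
    calc g * φ.symm x = φ.symm (φ g * x) := by simp [map_mul]
      _ = φ.symm (x * φ g) := by rw [this]
      _ = φ.symm x * g := by simp [map_mul]

/-- If `G ⧸ Z(G)` is a simple group with the `R∞`-property, then for an automorphism `φ` of
`G` the twisted conjugacy class `[e]_φ = { g·φ(g)⁻¹ : g ∈ G }` is a subgroup of `G` if and
only if `φ` is a central automorphism. -/
theorem twisted_class_of_one_subgroup_iff_central {G : Type*} [Group G]
    [IsSimpleGroup (G ⧸ Subgroup.center G)]
    (hR : RInfinity (G ⧸ Subgroup.center G)) (φ : G ≃* G) :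
    (∃ H : Subgroup G, (H : Set G) = {x : G | ∃ g : G, x = g * (φ g)⁻¹}) ↔
    (∀ g : G, g⁻¹ * φ g ∈ Subgroup.center G) := by
  constructor
  · rintro ⟨H, hH⟩
    -- the induced automorphism on Q = G ⧸ Z(G)
    set Z := Subgroup.center G
    let π : G →* G ⧸ Z := QuotientGroup.mk' Z
    let ψ : G ⧸ Z ≃* G ⧸ Z := QuotientGroup.congr Z Z φ (map_center_eq φ)
    have hψ : ∀ g : G, ψ (π g) = π (φ g) := fun g => rfl
    -- the image of H in Q
    let K : Subgroup (G ⧸ Z) := H.map π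
    have hπs : Function.Surjective π := QuotientGroup.mk'_surjective Z
    have hmemH : ∀ g : G, g * (φ g)⁻¹ ∈ H := by
      intro g
      have : g * (φ g)⁻¹ ∈ (H : Set G) := by rw [hH]; exact ⟨g, rfl⟩
      exact this
    have hK : (K : Set (G ⧸ Z)) = {x | ∃ q : G ⧸ Z, x = q * (ψ q)⁻¹} := by
      ext x
      constructor
      · rintro ⟨h, hh, rfl⟩
        have : h ∈ (H : Set G) := hh
        rw [hH] at this
        obtain ⟨g, rfl⟩ := this
        exact ⟨π g, by simp [hψ g, map_mul]⟩
      · rintro ⟨q, rfl⟩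
        obtain ⟨g, rfl⟩ := hπs q
        exact ⟨g * (φ g)⁻¹, hmemH g, by simp [hψ g, map_mul]⟩
    have hmemK : ∀ q : G ⧸ Z, q * (ψ q)⁻¹ ∈ K := by
      intro q
      have : q * (ψ q)⁻¹ ∈ (K : Set (G ⧸ Z)) := by rw [hK]; exact ⟨q, rfl⟩
      exact this
    -- x K ψ(x)⁻¹ ⊆ K
    have htw : ∀ (x : G ⧸ Z) (k : G ⧸ Z), k ∈ K → x * k * (ψ x)⁻¹ ∈ K := by
      intro x k hk
      have : k ∈ (K : Set (G ⧸ Z)) := hk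
      rw [hK] at this
      obtain ⟨q, rfl⟩ := this
      have : x * (q * (ψ q)⁻¹) * (ψ x)⁻¹ = (x * q) * (ψ (x * q))⁻¹ := by
        simp [map_mul, mul_assoc]
        exact (mul_inv_rev _ _).symm
      rw [this]
      exact hmemK (x * q)
    -- K is normal
    have hnorm : K.Normal := by
      constructor
      intro k hk x
      have h1 : x * k * (ψ x)⁻¹ ∈ K := htw x k hk
      have h2 : ψ x * x⁻¹ ∈ K := by
        have := K.inv_mem (hmemK x)
        have e : (x * (ψ x)⁻¹)⁻¹ = ψ x * x⁻¹ :=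
          (mul_inv_rev _ _).trans (congrArg (· * x⁻¹) (inv_inv _))
        rwa [e] at this
      have : x * k * x⁻¹ = (x * k * (ψ x)⁻¹) * (ψ x * x⁻¹) := by
        group
      rw [this]
      exact K.mul_mem h1 h2
    rcases hnorm.eq_bot_or_eq_top with hbot | htop
    · -- K = ⊥ : φ is central
      intro g
      have h1 : π (g * (φ g)⁻¹) ∈ K := ⟨g * (φ g)⁻¹, hmemH g, rfl⟩
      rw [hbot, Subgroup.mem_bot] at h1
      have h2 : g * (φ g)⁻¹ ∈ Z := (QuotientGroup.eq_one_iff _).mp h1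
      -- g⁻¹ * φ g  =  g⁻¹ * (g * (φ g)⁻¹)⁻¹ * g
      have h3 : g⁻¹ * φ g = g⁻¹ * (g * (φ g)⁻¹)⁻¹ * g := by group
      rw [h3]
      have := (inferInstance : Z.Normal).conj_mem _ (Z.inv_mem h2) g⁻¹
      simpa using this
    · -- K = ⊤ : contradiction with R∞
      exfalso
      have hone : ∀ x : G ⧸ Z, ∃ q : G ⧸ Z, x = q * (ψ q)⁻¹ := by
        intro x
        have : x ∈ (K : Set (G ⧸ Z)) := by rw [htop]; trivial
        rwa [hK] at this
      haveI := hR ψ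
      have hsub : Subsingleton (Quotient (twistedConjSetoid (G ⧸ Z) ψ)) := by
        constructor
        intro a b
        induction a using Quotient.ind
        induction b using Quotient.ind
        rename_i x y
        apply Quotient.sound
        obtain ⟨q, hq⟩ := hone x
        obtain ⟨r, hr⟩ := hone y
        have h1 : (twistedConjSetoid (G ⧸ Z) ψ).r x 1 := by
          refine ⟨q⁻¹, ?_⟩
          rw [hq]; simp [map_inv]
        have h2 : (twistedConjSetoid (G ⧸ Z) ψ).r (1 : G ⧸ Z) y := ⟨r, by simpa using hr⟩
        exact (twistedConjSetoid (G ⧸ Z) ψ).trans h1 h2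
      exact (not_subsingleton _) hsub
  · -- backward direction
    intro hc
    -- g * (φ g)⁻¹ is central for all g
    have hcent : ∀ g : G, g * (φ g)⁻¹ ∈ Subgroup.center G := by
      intro g
      have h1 := (Subgroup.center G).inv_mem (hc g)
      have h2 : g * (φ g)⁻¹ = g * ((φ g)⁻¹ * g) * g⁻¹ := by group
      rw [h2]
      have := (inferInstance : (Subgroup.center G).Normal).conj_mem _ (by simpa using h1) g
      simpa using this
    refine ⟨{ carrier := {x : G | ∃ g : G, x = g * (φ g)⁻¹}
              one_mem' := ⟨1, by simp⟩
              mul_mem' := ?_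
              inv_mem' := ?_ }, rfl⟩
    · rintro x y ⟨g, rfl⟩ ⟨h, rfl⟩
      refine ⟨g * h, ?_⟩
      have hc2 := Subgroup.mem_center_iff.mp (hcent h) (φ g)⁻¹
      calc g * (φ g)⁻¹ * (h * (φ h)⁻¹)
          = g * ((φ g)⁻¹ * (h * (φ h)⁻¹)) := by group
        _ = g * (h * (φ h)⁻¹ * (φ g)⁻¹) := by rw [hc2]
        _ = g * h * (φ (g * h))⁻¹ := by rw [map_mul]; group
    · rintro x ⟨g, rfl⟩
      refine ⟨g⁻¹, ?_⟩
      have hz := Subgroup.mem_center_iff.mp (hc g) g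
      have h1 : φ g = g⁻¹ * φ g * g := by rw [← hz]; group
      calc (g * (φ g)⁻¹)⁻¹ = φ g * g⁻¹ := by group
        _ = (g⁻¹ * φ g * g) * g⁻¹ := by rw [← h1]
        _ = g⁻¹ * φ g := by group
        _ = g⁻¹ * (φ g⁻¹)⁻¹ := by rw [map_inv]; group
end
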